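/- For any partition λ and positive integers k, n, the rectangular Schur polynomials satisfy the bilinear identity s_{(k^n)} · s_{(k^n)} = s_{((k+1)^n)} · s_{((k-1)^n)} + s_{(k^{n+1})} · s_{(k^{n-1})}, where (k^n) denotes the partition with n parts all equal to k. -/

import Mathlib

open MvPolynomial

/-- The images of the variables in the field of fractions of the polynomial ring. -/
noncomputable def Xfrac (N : ℕ) (j : Fin N) : FractionRing (MvPolynomial (Fin N) ℚ) :=
  algebraMap (MvPolynomial (Fin N) ℚ) (FractionRing (MvPolynomial (Fin N) ℚ)) (X j)

/-- The Schur polynomial of a partition `lam` (given as a function `ℕ → ℕ`, padded with zeros)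
in `N` variables, via the bialternant formula
`s_lam = det(x_j ^ (lam_i + N - i)) / det(x_j ^ (N - i))`. -/
noncomputable def schurDet (N : ℕ) (lam : ℕ → ℕ) : FractionRing (MvPolynomial (Fin N) ℚ) :=
  Matrix.det (Matrix.of fun i j : Fin N => Xfrac N j ^ (lam i + (N - 1 - (i : ℕ)))) /
    Matrix.det (Matrix.of fun i j : Fin N => Xfrac N j ^ (N - 1 - (i : ℕ)))

/-- The rectangular partition `(k^n)`: `n` parts all equal to `k`. -/
def rectPart (k n : ℕ) (i : ℕ) : ℕ := if i < n then k else 0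

section SchurAux


variable {R : Type*} [CommRing R]

/-- Complete homogeneous symmetric function of the elements of a list. -/
def hpoly : List R → ℕ → R
  | _, 0 => 1
  | [], _ + 1 => 0
  | y :: t, a + 1 => hpoly t (a + 1) + y * hpoly (y :: t) a
  termination_by l a => (l.length, a)

/-- Elementary symmetric function of the elements of a list. -/
def epoly : List R → ℕ → R
  | _, 0 => 1
  | [], _ + 1 => 0
  | y :: t, r + 1 => epoly t (r + 1) + y * epoly t r

@[simp] lemma hpoly_zero (l : List R) : hpoly l 0 = 1 := by cases l <;> simp [hpoly]
@[simp] lemma hpoly_nil_succ (a : ℕ) : hpoly ([] : List R) (a + 1) = 0 := by simp [hpoly]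
lemma hpoly_cons (y : R) (t : List R) (a : ℕ) :
    hpoly (y :: t) (a + 1) = hpoly t (a + 1) + y * hpoly (y :: t) a := by
  rw [hpoly]

@[simp] lemma epoly_zero (l : List R) : epoly l 0 = 1 := by cases l <;> simp [epoly]
@[simp] lemma epoly_nil_succ (r : ℕ) : epoly ([] : List R) (r + 1) = 0 := by simp [epoly]
lemma epoly_cons (y : R) (t : List R) (r : ℕ) :
    epoly (y :: t) (r + 1) = epoly t (r + 1) + y * epoly t r := by simp [epoly]

lemma epoly_eq_zero_of_length_lt : ∀ (l : List R) (r : ℕ), l.length < r → epoly l r = 0 := by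
  intro l
  induction l with
  | nil => intro r hr; obtain ⟨s, rfl⟩ := Nat.exists_eq_add_of_lt hr; simp [Nat.add_comm]
  | cons y t ih =>
      intro r hr
      obtain ⟨s, rfl⟩ : ∃ s, r = s + 1 := ⟨r - 1, by omega⟩
      have h1 : t.length < s + 1 := by simp at hr; omega
      have h2 : t.length < s := by simp at hr; omega
      rw [epoly_cons, ih _ h1, ih s h2]
      ring

/-- `hpoly` is invariant under permutations of the list. -/
lemma hpoly_perm {l₁ l₂ : List R} (h : l₁.Perm l₂) : ∀ a, hpoly l₁ a = hpoly l₂ a := by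
  induction h with
  | nil => intro a; rfl
  | cons y _ ih =>
      intro a
      induction a with
      | zero => simp
      | succ a iha => rw [hpoly_cons, hpoly_cons, ih, iha]
  | swap x y t =>
      intro a
      induction a using Nat.strong_induction_on with
      | _ a iha =>
        match a with
        | 0 => simp
        | 1 => rw [hpoly_cons, hpoly_cons, hpoly_cons, hpoly_cons]; simp; ring
        | (a + 2) =>
          have ih1 := iha (a + 1) (by omega)
          have ih0 := iha a (by omega)
          have e1 : hpoly (y :: x :: t) (a + 2)
              = hpoly t (a + 2) + x * hpoly (x :: t) (a + 1) + y * hpoly (y :: x :: t) (a + 1) := by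
            rw [hpoly_cons, hpoly_cons]; try ring
          have e2 : hpoly (x :: y :: t) (a + 2)
              = hpoly t (a + 2) + y * hpoly (y :: t) (a + 1) + x * hpoly (x :: y :: t) (a + 1) := by
            rw [hpoly_cons, hpoly_cons]; try ring
          have w1 : hpoly (x :: y :: t) (a + 1)
              = hpoly (y :: t) (a + 1) + x * hpoly (x :: y :: t) a := hpoly_cons ..
          have w2 : hpoly (y :: x :: t) (a + 1)
              = hpoly (x :: t) (a + 1) + y * hpoly (y :: x :: t) a := hpoly_cons ..
          have ih1' : hpoly (y :: x :: t) (a + 1)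
              = hpoly (y :: t) (a + 1) + x * hpoly (x :: y :: t) a := ih1.trans w1
          have ih1'' : hpoly (x :: y :: t) (a + 1)
              = hpoly (x :: t) (a + 1) + y * hpoly (x :: y :: t) a :=
            ih1.symm.trans (w2.trans (by rw [ih0]))
          rw [e1, e2, ih1', ih1'']
          ring
  | trans _ _ ih1 ih2 => intro a; rw [ih1, ih2]

/-- `hpoly` extended to integer indices by zero. -/
noncomputable def hZ (l : List R) (z : ℤ) : R := if 0 ≤ z then hpoly l z.toNat else 0

@[simp] lemma hZ_neg (l : List R) {z : ℤ} (h : z < 0) : hZ l z = 0 := by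
  simp [hZ, not_le.mpr h]

@[simp] lemma hZ_ofNat (l : List R) (a : ℕ) : hZ l (a : ℤ) = hpoly l a := by
  simp [hZ]

@[simp] lemma hZ_zero (l : List R) : hZ l 0 = 1 := by simp [hZ]

lemma hZ_perm {l₁ l₂ : List R} (h : l₁.Perm l₂) (z : ℤ) : hZ l₁ z = hZ l₂ z := by
  unfold hZ; rw [hpoly_perm h]

lemma hZ_cons (y : R) (t : List R) (z : ℤ) :
    hZ (y :: t) z = hZ t z + y * hZ (y :: t) (z - 1) := by
  rcases lt_trichotomy z 0 with h | h | h
  · rw [hZ_neg _ h, hZ_neg _ h, hZ_neg _ (by omega)]; ring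
  · subst h; simp
  · obtain ⟨a, rfl⟩ : ∃ a : ℕ, z = (a : ℤ) + 1 := ⟨(z - 1).toNat, by omega⟩
    have : ((a : ℤ) + 1 - 1) = (a : ℤ) := by ring
    rw [this]
    have : ((a : ℤ) + 1) = ((a + 1 : ℕ) : ℤ) := by push_cast; ring
    rw [this, hZ_ofNat, hZ_ofNat, hZ_ofNat, hpoly_cons]

@[simp] lemma hZ_nil (z : ℤ) : hZ ([] : List R) z = if z = 0 then 1 else 0 := by
  rcases lt_trichotomy z 0 with h | h | h
  · rw [hZ_neg _ h, if_neg (by omega)]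
  · subst h; simp
  · obtain ⟨a, rfl⟩ : ∃ a : ℕ, z = ((a + 1 : ℕ) : ℤ) := ⟨(z - 1).toNat, by omega⟩
    rw [hZ_ofNat, hpoly_nil_succ, if_neg (by exact_mod_cast Nat.succ_ne_zero a)]

open Finset in
/-- The classical orthogonality `∑ (-1)^r e_r h_{a-r} = δ_{a,0}`. -/
lemma orth (l : List R) (a : ℕ) :
    ∑ r ∈ range (l.length + 1), (-1 : R) ^ r * epoly l r * hZ l ((a : ℤ) - r)
      = if a = 0 then 1 else 0 := by
  induction l with
  | nil =>
      simp only [List.length_nil, range_one, sum_singleton, pow_zero, epoly_zero, one_mul,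
        Nat.cast_zero, sub_zero, hZ_nil]
      simp [Int.natCast_eq_zero]
  | cons y t ih =>
      have expand : ∀ z : ℤ, hZ (y :: t) z = hZ t z + y * hZ (y :: t) (z - 1) := hZ_cons y t
      set m := t.length with hm
      have hlen : (y :: t).length = m + 1 := rfl
      rw [hlen]
      set Q : R := ∑ r ∈ range (m + 1), (-1 : R) ^ r * epoly t r * hZ (y :: t) ((a : ℤ) - 1 - r)
        with hQ
      set P : R := ∑ r ∈ range (m + 1), (-1 : R) ^ r * epoly t (r + 1) * hZ (y :: t) ((a : ℤ) - 1 - r)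
        with hP
      set S1 : R := ∑ r ∈ range (m + 1), (-1 : R) ^ r * epoly t r * hZ (y :: t) ((a : ℤ) - r)
        with hS1
      have hPS1 : S1 = -P + hZ (y :: t) (a : ℤ) := by
        have last0 : ((-1 : R) ^ m * epoly t (m + 1) * hZ (y :: t) ((a : ℤ) - 1 - m)) = 0 := by
          rw [epoly_eq_zero_of_length_lt t (m + 1) (by omega)]; ring
        rw [hS1, Finset.sum_range_succ' _ m]
        simp only [pow_zero, epoly_zero, one_mul, Nat.cast_zero, sub_zero]
        congr 1
        rw [hP, Finset.sum_range_succ _ m, last0, add_zero, ← Finset.sum_neg_distrib]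
        refine Finset.sum_congr rfl fun r _ => ?_
        have : (a : ℤ) - ((r + 1 : ℕ) : ℤ) = (a : ℤ) - 1 - r := by push_cast; ring
        rw [this, pow_succ]
        ring
      have key1 : (∑ r ∈ range (m + 1 + 1),
            (-1 : R) ^ r * epoly (y :: t) r * hZ (y :: t) ((a : ℤ) - r)) = S1 - y * Q := by
        rw [Finset.sum_range_succ' _ (m + 1)]
        simp only [pow_zero, epoly_zero, one_mul, Nat.cast_zero, sub_zero]
        have step : ∀ r, (-1 : R) ^ (r + 1) * epoly (y :: t) (r + 1) * hZ (y :: t) ((a : ℤ) - ((r + 1 : ℕ) : ℤ))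
            = (-((-1 : R) ^ r * epoly t (r + 1) * hZ (y :: t) ((a : ℤ) - 1 - r)))
              + (-(y * ((-1 : R) ^ r * epoly t r * hZ (y :: t) ((a : ℤ) - 1 - r)))) := by
          intro r
          have : (a : ℤ) - ((r + 1 : ℕ) : ℤ) = (a : ℤ) - 1 - r := by push_cast; ring
          rw [this, epoly_cons, pow_succ]
          ring
        rw [Finset.sum_congr rfl fun r _ => step r, Finset.sum_add_distrib,
          Finset.sum_neg_distrib, Finset.sum_neg_distrib, ← Finset.mul_sum, ← hP, ← hQ, hPS1]
        ring
      have key2 : S1 = (∑ r ∈ range (m + 1), (-1 : R) ^ r * epoly t r * hZ t ((a : ℤ) - r))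
          + y * Q := by
        rw [hS1, hQ, Finset.mul_sum, ← Finset.sum_add_distrib]
        refine Finset.sum_congr rfl fun r _ => ?_
        rw [expand ((a : ℤ) - r)]
        have : (a : ℤ) - r - 1 = (a : ℤ) - 1 - r := by ring
        rw [this]
        ring
      rw [key1, key2, ih]
      ring

open Finset in
/-- The key identity `∑ (-1)^r e_r(l) h_{a-r}(y::l) = y^a`. -/
lemma keyid (l : List R) (y : R) (a : ℕ) :
    ∑ r ∈ range (l.length + 1), (-1 : R) ^ r * epoly l r * hZ (y :: l) ((a : ℤ) - r) = y ^ a := by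
  induction a with
  | zero =>
      have : ∀ r ∈ range (l.length + 1),
          (-1 : R) ^ r * epoly l r * hZ (y :: l) ((0 : ℕ) - (r : ℤ))
          = (-1 : R) ^ r * epoly l r * hZ l ((0 : ℕ) - (r : ℤ)) := by
        intro r _
        rcases Nat.eq_zero_or_pos r with rfl | hr
        · simp
        · rw [hZ_neg _ (by push_cast; omega), hZ_neg _ (by push_cast; omega)]
      rw [Finset.sum_congr rfl this, orth]
      simp
  | succ b ih =>
      have expand : ∀ r ∈ range (l.length + 1),
          (-1 : R) ^ r * epoly l r * hZ (y :: l) (((b + 1 : ℕ) : ℤ) - r)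
          = (-1 : R) ^ r * epoly l r * hZ l (((b + 1 : ℕ) : ℤ) - r)
            + y * ((-1 : R) ^ r * epoly l r * hZ (y :: l) ((b : ℕ) - (r : ℤ))) := by
        intro r _
        rw [hZ_cons]
        have : ((b + 1 : ℕ) : ℤ) - r - 1 = ((b : ℕ) : ℤ) - r := by push_cast; ring
        rw [this]
        ring
      rw [Finset.sum_congr rfl expand, Finset.sum_add_distrib, ← Finset.mul_sum, ih]
      have horth : (∑ r ∈ range (l.length + 1),
          (-1 : R) ^ r * epoly l r * hZ l (((b + 1 : ℕ) : ℤ) - r)) = 0 := by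
        rw [orth]; simp
      rw [horth]
      ring

open Matrix Finset

section Mat

variable {N : ℕ} (y : Fin N → R)

/-- The alternant matrix. -/
def Xmat (α : Fin N → ℕ) : Matrix (Fin N) (Fin N) R := of fun i j => y j ^ α i

/-- The matrix of complete homogeneous symmetric functions. -/
noncomputable def Hmat (l : List R) (α : Fin N → ℕ) : Matrix (Fin N) (Fin N) R :=
  of fun i r => hZ l ((α i : ℤ) - ((N - 1 - (r : ℕ) : ℕ) : ℤ))

/-- The matrix of (signed) elementary symmetric functions with one variable omitted. -/
noncomputable def Emat [DecidableEq R] : Matrix (Fin N) (Fin N) R :=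
  of fun r j =>
    (-1 : R) ^ (N - 1 - (r : ℕ)) * epoly ((List.ofFn y).erase (y j)) (N - 1 - (r : ℕ))

lemma Hmat_mul_Emat [DecidableEq R] (α : Fin N → ℕ) : Hmat (List.ofFn y) α * Emat y = Xmat y α := by
  ext i j
  rw [mul_apply]
  have hmem : y j ∈ List.ofFn y := List.mem_ofFn.2 ⟨j, rfl⟩
  have hperm : (List.ofFn y).Perm (y j :: (List.ofFn y).erase (y j)) := List.perm_cons_erase hmem
  set l := (List.ofFn y).erase (y j) with hl
  have hlen : l.length + 1 = N := by
    rw [hl, List.length_erase_add_one hmem, List.length_ofFn]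
  set g : Fin N → R := fun s =>
    (-1 : R) ^ (s : ℕ) * epoly l (s : ℕ) * hZ (y j :: l) ((α i : ℤ) - ((s : ℕ) : ℤ)) with hg
  have stepA : ∀ r : Fin N, Hmat (List.ofFn y) α i r * Emat y r j = g (Fin.rev r) := by
    intro r
    have hv : ((Fin.rev r : Fin N) : ℕ) = N - 1 - (r : ℕ) := by rw [Fin.val_rev]; omega
    rw [hg]
    simp only [Hmat, Emat, of_apply, hv]
    rw [hZ_perm hperm]
    ring
  rw [Finset.sum_congr rfl fun r _ => stepA r,
    (Fintype.sum_bijective Fin.rev Fin.rev_bijective _ _ (fun r => rfl) :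
      (∑ r : Fin N, g r.rev) = ∑ s : Fin N, g s)]
  show (∑ s : Fin N, g s) = Xmat y α i j
  rw [hg]
  simp only
  rw [Fin.sum_univ_eq_sum_range
    (fun s => (-1 : R) ^ s * epoly l s * hZ (y j :: l) ((α i : ℤ) - (s : ℤ))) N]
  have hk := keyid l (y j) (α i)
  rw [hlen] at hk
  rw [hk]
  rfl

/-- Determinant of the unitriangular shift matrix. -/
lemma det_hZ_shift (l : List R) (q : ℕ) :
    Matrix.det (of fun i j : Fin q => hZ l ((j : ℕ) - (i : ℕ) : ℤ)) = 1 := by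
  have ht : (of fun i j : Fin q => hZ l ((j : ℕ) - (i : ℕ) : ℤ)).BlockTriangular id := by
    intro i j hij
    simp only [of_apply]
    exact hZ_neg _ (by simp at hij; omega)
  rw [Matrix.det_of_upperTriangular ht]
  refine Finset.prod_eq_one fun i _ => ?_
  simp only [of_apply, sub_self, hZ_zero]

end Mat

open Matrix Finset in
/-- Padding a Jacobi-Trudi determinant with zero parts does not change it. -/
lemma det_JT_pad (l : List R) (m p : ℕ) (lam : ℕ → ℕ) (h0 : ∀ i, m ≤ i → lam i = 0) :
    Matrix.det (of fun i j : Fin (m + p) => hZ l ((lam i : ℤ) - (i : ℕ) + (j : ℕ)))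
      = Matrix.det (of fun i j : Fin m => hZ l ((lam i : ℤ) - (i : ℕ) + (j : ℕ))) := by
  rw [← Matrix.det_submatrix_equiv_self (finSumFinEquiv (m := m) (n := p))]
  have hblock : (of fun i j : Fin (m + p) => hZ l ((lam i : ℤ) - (i : ℕ) + (j : ℕ))).submatrix
        finSumFinEquiv finSumFinEquiv
      = Matrix.fromBlocks
        (of fun i j : Fin m => hZ l ((lam i : ℤ) - (i : ℕ) + (j : ℕ)))
        (of fun (i : Fin m) (j : Fin p) => hZ l ((lam i : ℤ) - (i : ℕ) + ((m : ℕ) + (j : ℕ))))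
        0
        (of fun i j : Fin p => hZ l ((j : ℕ) - (i : ℕ) : ℤ)) := by
    ext i j
    rcases i with i | i <;> rcases j with j | j <;>
        simp only [Matrix.submatrix_apply, finSumFinEquiv_apply_left, finSumFinEquiv_apply_right,
          Matrix.fromBlocks_apply₁₁, Matrix.fromBlocks_apply₁₂, Matrix.fromBlocks_apply₂₁,
          Matrix.fromBlocks_apply₂₂, Fin.coe_castAdd, Fin.coe_natAdd, Matrix.of_apply,
          Matrix.zero_apply]
    · congr 1 <;> (push_cast; ring)
    · rw [h0 (m + ↑i) (by omega)]
      exact hZ_neg _ (by have := j.isLt; push_cast; omega)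
    · rw [h0 (m + ↑i) (by omega)]
      congr 1 <;> (push_cast; ring)
  rw [hblock, Matrix.det_fromBlocks_zero₂₁, det_hZ_shift, mul_one]


variable {K : Type*} [Field K]

/-- corner equivalence: groups `{0, last}` and the interior of `Fin (q+2)`. -/
noncomputable def cornerEquiv (q : ℕ) : (Fin 1 ⊕ Fin 1) ⊕ Fin q ≃ Fin (q + 2) :=
  (((Equiv.sumAssoc (Fin 1) (Fin 1) (Fin q)).trans
    ((Equiv.refl (Fin 1)).sumCongr (Equiv.sumComm (Fin 1) (Fin q)))).trans
    ((Equiv.sumAssoc (Fin 1) (Fin q) (Fin 1)).symm.trans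
      ((finSumFinEquiv.sumCongr (Equiv.refl (Fin 1))).trans finSumFinEquiv))).trans
    (finCongr (by omega))

lemma cornerEquiv_inl_inl (q : ℕ) (t : Fin 1) :
    cornerEquiv q (Sum.inl (Sum.inl t)) = (0 : Fin (q + 2)) := by
  simp [cornerEquiv, Equiv.sumAssoc, Equiv.sumComm, finCongr]
  ext
  simp

lemma cornerEquiv_inl_inr (q : ℕ) (t : Fin 1) :
    cornerEquiv q (Sum.inl (Sum.inr t)) = Fin.last (q + 1) := by
  have ht := t.isLt
  apply Fin.ext
  simp [cornerEquiv, Equiv.sumAssoc, Equiv.sumComm, finCongr, Fin.last]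
  try omega

lemma cornerEquiv_inr (q : ℕ) (i : Fin q) :
    cornerEquiv q (Sum.inr i) = (i.succ).castSucc := by
  apply Fin.ext
  simp [cornerEquiv, Equiv.sumAssoc, Equiv.sumComm, finCongr]
  try omega

/-- Cofactor formula for the adjugate over `Fin (q+1)`-indexed matrices. -/
lemma adjugate_eq_cofactor {q : ℕ} (M : Matrix (Fin (q + 1)) (Fin (q + 1)) K) (i j : Fin (q + 1)) :
    adjugate M i j = (-1 : K) ^ ((i : ℕ) + (j : ℕ)) *
      det (M.submatrix j.succAbove i.succAbove) := by
  rw [Matrix.adjugate_apply, Matrix.det_succ_row _ j]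
  rw [Finset.sum_eq_single i]
  · rw [Matrix.updateRow_self]
    rw [Pi.single_eq_same]
    have hsub : (M.updateRow j (Pi.single i 1)).submatrix j.succAbove i.succAbove
        = M.submatrix j.succAbove i.succAbove := by
      ext a b
      rw [Matrix.submatrix_apply, Matrix.submatrix_apply,
        Matrix.updateRow_apply, if_neg (Fin.succAbove_ne j a)]
    rw [hsub, add_comm (j : ℕ) (i : ℕ)]
    ring
  · intro b _ hbi
    rw [Matrix.updateRow_self, Pi.single_eq_of_ne hbi]
    ring
  · intro h
    exact absurd (Finset.mem_univ i) h

/-- Desnanot–Jacobi / Dodgson condensation, for matrices with nonzero determinant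
over a field. -/
lemma dodgson {q : ℕ} (M : Matrix (Fin (q + 2)) (Fin (q + 2)) K) (hd : det M ≠ 0) :
    det M * det (M.submatrix (fun i : Fin q => (i.succ).castSucc)
        (fun j : Fin q => (j.succ).castSucc))
      = det (M.submatrix Fin.succ Fin.succ) * det (M.submatrix Fin.castSucc Fin.castSucc)
        - det (M.submatrix Fin.castSucc Fin.succ) * det (M.submatrix Fin.succ Fin.castSucc) := by
  classical
  set d := det M with hdd
  set A := adjugate M with hA
  set C : Matrix (Fin (q + 2)) (Fin (q + 2)) K := Matrix.of fun i j =>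
    if j = 0 then A i 0 else if j = Fin.last (q + 1) then A i (Fin.last (q + 1))
    else if i = j then 1 else 0 with hC
  have h1 : ∀ t : Fin q, ((t.succ).castSucc : Fin (q + 2)) ≠ 0 := fun t => by
    simp [Fin.ext_iff]
  have h1' : ∀ t : Fin q, (0 : Fin (q + 2)) ≠ (t.succ).castSucc := fun t => (h1 t).symm
  have h2 : ∀ t : Fin q, ((t.succ).castSucc : Fin (q + 2)) ≠ Fin.last (q + 1) := fun t => by
    have := t.isLt
    simp [Fin.ext_iff]
    omega
  have h2' : ∀ t : Fin q, Fin.last (q + 1) ≠ ((t.succ).castSucc : Fin (q + 2)) :=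
    fun t => (h2 t).symm
  have h3 : Fin.last (q + 1) ≠ (0 : Fin (q + 2)) := by simp [Fin.ext_iff]
  have h3' : (0 : Fin (q + 2)) ≠ Fin.last (q + 1) := h3.symm
  have hCblock : C.submatrix (cornerEquiv q) (cornerEquiv q) =
      Matrix.fromBlocks
        (Matrix.of fun s t : Fin 1 ⊕ Fin 1 =>
          A ((cornerEquiv q) (Sum.inl s)) ((cornerEquiv q) (Sum.inl t)))
        0
        (Matrix.of fun (s : Fin q) (t : Fin 1 ⊕ Fin 1) =>
          A ((cornerEquiv q) (Sum.inr s)) ((cornerEquiv q) (Sum.inl t)))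
        (1 : Matrix (Fin q) (Fin q) K) := by
    ext s t
    rcases s with (s | s) | s <;> rcases t with (t | t) | t <;>
      simp only [Matrix.submatrix_apply, cornerEquiv_inl_inl, cornerEquiv_inl_inr,
        cornerEquiv_inr, Matrix.fromBlocks_apply₁₁, Matrix.fromBlocks_apply₁₂,
        Matrix.fromBlocks_apply₂₁, Matrix.fromBlocks_apply₂₂, Matrix.of_apply,
        Matrix.zero_apply, hC] <;>
      simp [h1, h1', h2, h2', h3, h3', Matrix.one_apply, Fin.castSucc_inj,
        fun t : Fin q => show Fin.last (q + 1) ≠ (t.castSucc).succ from h2' t,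
        fun t : Fin q => show (0 : Fin (q + 2)) ≠ (t.castSucc).succ from h1' t]
  have hcorner00 : cornerEquiv q (Sum.inl (Sum.inl 0)) = (0 : Fin (q + 2)) :=
    cornerEquiv_inl_inl q 0
  have hcornerll : cornerEquiv q (Sum.inl (Sum.inr 0)) = Fin.last (q + 1) :=
    cornerEquiv_inl_inr q 0
  have hdetC : det C = A 0 0 * A (Fin.last (q + 1)) (Fin.last (q + 1))
      - A 0 (Fin.last (q + 1)) * A (Fin.last (q + 1)) 0 := by
    rw [← Matrix.det_submatrix_equiv_self (cornerEquiv q), hCblock,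
      Matrix.det_fromBlocks_zero₁₂, Matrix.det_one, mul_one]
    set P : Matrix (Fin 1 ⊕ Fin 1) (Fin 1 ⊕ Fin 1) K := Matrix.of fun s t =>
      A ((cornerEquiv q) (Sum.inl s)) ((cornerEquiv q) (Sum.inl t)) with hP
    rw [← Matrix.det_submatrix_equiv_self (finSumFinEquiv (m := 1) (n := 1)).symm P,
      Matrix.det_fin_two]
    have e0 : (finSumFinEquiv (m := 1) (n := 1)).symm (0 : Fin 2) = Sum.inl 0 := rfl
    have e1 : (finSumFinEquiv (m := 1) (n := 1)).symm (1 : Fin 2) = Sum.inr 0 := rfl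
    simp only [Matrix.submatrix_apply, e0, e1, hP, Matrix.of_apply, hcorner00, hcornerll]
  have hMA : M * A = d • (1 : Matrix (Fin (q + 2)) (Fin (q + 2)) K) := Matrix.mul_adjugate M
  have hMC : M * C = Matrix.of fun i j =>
      if j = 0 then d * (if i = (0 : Fin (q + 2)) then 1 else 0)
      else if j = Fin.last (q + 1) then d * (if i = Fin.last (q + 1) then 1 else 0)
      else M i j := by
    ext i j
    rw [Matrix.mul_apply]
    by_cases hj0 : j = 0
    · subst hj0
      have : ∀ k, C k (0 : Fin (q + 2)) = A k 0 := fun k => by simp [hC]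
      simp only [this]
      have : (∑ k, M i k * A k 0) = (M * A) i 0 := (Matrix.mul_apply).symm
      rw [this, hMA]
      simp [Matrix.smul_apply, Matrix.one_apply]
    · by_cases hjl : j = Fin.last (q + 1)
      · subst hjl
        have : ∀ k, C k (Fin.last (q + 1)) = A k (Fin.last (q + 1)) := fun k => by
          simp [hC, h3]
        simp only [this]
        have : (∑ k, M i k * A k (Fin.last (q + 1))) = (M * A) i (Fin.last (q + 1)) :=
          (Matrix.mul_apply).symm
        rw [this, hMA]
        simp [Matrix.smul_apply, Matrix.one_apply, h3]
      · have : ∀ k, C k j = if k = j then 1 else 0 := fun k => by simp [hC, hj0, hjl]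
        simp only [this, Matrix.of_apply, if_neg hj0, if_neg hjl, mul_ite, mul_one, mul_zero]
        simp
  have hMCblock : (M * C).submatrix (cornerEquiv q) (cornerEquiv q) =
      Matrix.fromBlocks
        (d • (1 : Matrix (Fin 1 ⊕ Fin 1) (Fin 1 ⊕ Fin 1) K))
        (Matrix.of fun (s : Fin 1 ⊕ Fin 1) (t : Fin q) =>
          M ((cornerEquiv q) (Sum.inl s)) ((cornerEquiv q) (Sum.inr t)))
        0
        (M.submatrix (fun i : Fin q => (i.succ).castSucc)
          (fun j : Fin q => (j.succ).castSucc)) := by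
    ext s t
    rcases s with (s | s) | s <;> rcases t with (t | t) | t <;>
      simp only [Matrix.submatrix_apply, cornerEquiv_inl_inl, cornerEquiv_inl_inr,
        cornerEquiv_inr, Matrix.fromBlocks_apply₁₁, Matrix.fromBlocks_apply₁₂,
        Matrix.fromBlocks_apply₂₁, Matrix.fromBlocks_apply₂₂, Matrix.of_apply,
        Matrix.zero_apply, hMC, Matrix.smul_apply, Matrix.one_apply] <;>
      simp [h1, h1', h2, h2', h3, h3', Fin.fin_one_eq_zero]
  have hdet1 : det (M * C) = d * det C := by rw [Matrix.det_mul, ← hdd]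
  have hdet2 : det (M * C) = d ^ 2 * det (M.submatrix (fun i : Fin q => (i.succ).castSucc)
      (fun j : Fin q => (j.succ).castSucc)) := by
    rw [← Matrix.det_submatrix_equiv_self (cornerEquiv q), hMCblock,
      Matrix.det_fromBlocks_zero₂₁, Matrix.det_smul, Matrix.det_one]
    have : Fintype.card (Fin 1 ⊕ Fin 1) = 2 := by simp
    rw [this]
    ring
  have hcancel : det C = d * det (M.submatrix (fun i : Fin q => (i.succ).castSucc)
      (fun j : Fin q => (j.succ).castSucc)) := by
    refine mul_left_cancel₀ hd ?_
    rw [← hdet1, hdet2]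
    ring
  rw [← hcancel, hdetC]
  have hA00 : A 0 0 = det (M.submatrix Fin.succ Fin.succ) := by
    rw [hA, adjugate_eq_cofactor]
    simp
  have hAll : A (Fin.last (q + 1)) (Fin.last (q + 1))
      = det (M.submatrix Fin.castSucc Fin.castSucc) := by
    rw [hA, adjugate_eq_cofactor, Fin.succAbove_last, Fin.val_last,
      show (-1 : K) ^ ((q + 1) + (q + 1)) = 1 from Even.neg_one_pow ⟨q + 1, by ring⟩, one_mul]
  have hA0l : A 0 (Fin.last (q + 1)) * A (Fin.last (q + 1)) 0
      = det (M.submatrix Fin.castSucc Fin.succ) * det (M.submatrix Fin.succ Fin.castSucc) := by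
    rw [hA, adjugate_eq_cofactor, adjugate_eq_cofactor]
    simp only [Fin.succAbove_zero, Fin.succAbove_last, Fin.val_zero, Fin.val_last]
    have hsgn : ((-1 : K) ^ (0 + (q + 1))) * ((-1 : K) ^ ((q + 1) + 0)) = 1 := by
      rw [← pow_add]
      exact Even.neg_one_pow ⟨q + 1, by ring⟩
    calc (-1 : K) ^ (0 + (q + 1)) * det (M.submatrix Fin.castSucc Fin.succ)
          * ((-1 : K) ^ ((q + 1) + 0) * det (M.submatrix Fin.succ Fin.castSucc))
        = ((-1 : K) ^ (0 + (q + 1)) * ((-1 : K) ^ ((q + 1) + 0)))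
          * (det (M.submatrix Fin.castSucc Fin.succ) * det (M.submatrix Fin.succ Fin.castSucc)) := by
          ring
      _ = det (M.submatrix Fin.castSucc Fin.succ) * det (M.submatrix Fin.succ Fin.castSucc) := by
          rw [hsgn, one_mul]
  rw [hA00, hAll, hA0l]


lemma prod_X_pow_monomial {N : ℕ} (f : Fin N → ℕ) :
    (∏ i, (X i : MvPolynomial (Fin N) ℚ) ^ f i)
      = monomial (∑ i, Finsupp.single i (f i)) (1 : ℚ) := by
  classical
  induction (univ : Finset (Fin N)) using Finset.induction_on with
  | empty => simp
  | insert a s hnotmem ih =>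
      rw [Finset.prod_insert hnotmem, Finset.sum_insert hnotmem, ih, X_pow_eq_monomial,
        monomial_mul, one_mul]

lemma finsupp_sum_single_apply {N : ℕ} (g : Fin N → ℕ) (j : Fin N) :
    (∑ i, Finsupp.single i (g i)) j = g j := by
  classical
  rw [Finsupp.finset_sum_apply]
  simp [Finsupp.single_apply]

lemma alternant_ne_zero {N : ℕ} (α : Fin N → ℕ) (hα : Function.Injective α) :
    Matrix.det (Matrix.of fun i j : Fin N => (X j : MvPolynomial (Fin N) ℚ) ^ α i) ≠ 0 := by
  classical
  set m0 : Fin N →₀ ℕ := ∑ i, Finsupp.single i (α i) with hm0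
  have hcoeff : MvPolynomial.coeff m0
      (Matrix.det (Matrix.of fun i j : Fin N => (X j : MvPolynomial (Fin N) ℚ) ^ α i)) = 1 := by
    rw [Matrix.det_apply', MvPolynomial.coeff_sum]
    have hterm : ∀ σ : Equiv.Perm (Fin N),
        MvPolynomial.coeff m0 ((((Equiv.Perm.sign σ : ℤ) : MvPolynomial (Fin N) ℚ)) *
          ∏ i, (Matrix.of fun i j : Fin N => (X j : MvPolynomial (Fin N) ℚ) ^ α i) (σ i) i)
        = ((Equiv.Perm.sign σ : ℤ) : ℚ) *
            (if (∑ i, Finsupp.single i (α (σ i))) = m0 then 1 else 0) := by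
      intro σ
      have hp : (∏ i, (Matrix.of fun i j : Fin N => (X j : MvPolynomial (Fin N) ℚ) ^ α i) (σ i) i)
          = ∏ i, (X i : MvPolynomial (Fin N) ℚ) ^ α (σ i) :=
        Finset.prod_congr rfl fun i _ => rfl
      rw [hp, prod_X_pow_monomial,
        show (((Equiv.Perm.sign σ : ℤ)) : MvPolynomial (Fin N) ℚ)
          = MvPolynomial.C (((Equiv.Perm.sign σ : ℤ) : ℚ)) from
            (map_intCast (MvPolynomial.C : ℚ →+* MvPolynomial (Fin N) ℚ) _).symm,
        MvPolynomial.coeff_C_mul, MvPolynomial.coeff_monomial]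
    rw [Finset.sum_congr rfl fun σ _ => hterm σ]
    rw [Finset.sum_eq_single (1 : Equiv.Perm (Fin N))]
    · simp [hm0]
    · intro σ _ hσ
      rw [if_neg, mul_zero]
      intro h
      apply hσ
      apply Equiv.ext
      intro j
      have hj := congrFun (congrArg (DFunLike.coe) h) j
      rw [finsupp_sum_single_apply, hm0, finsupp_sum_single_apply] at hj
      simpa using hα hj
    · intro h
      exact absurd (Finset.mem_univ _) h
  intro h
  rw [h] at hcoeff
  simp at hcoeff

end SchurAux

open Matrix Finset in
/-- Bilinear identity for rectangular Schur polynomials: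
`s_{(k^n)} ⬝ s_{(k^n)} = s_{((k+1)^n)} ⬝ s_{((k-1)^n)} + s_{(k^{n+1})} ⬝ s_{(k^{n-1})}`. -/
theorem schur_rectangular_bilinear (k n N : ℕ) (hk : 1 ≤ k) (hn : 1 ≤ n) (hN : n + 1 ≤ N) :
    schurDet N (rectPart k n) * schurDet N (rectPart k n) =
      schurDet N (rectPart (k + 1) n) * schurDet N (rectPart (k - 1) n) +
        schurDet N (rectPart k (n + 1)) * schurDet N (rectPart k (n - 1)) := by
  classical
  set K := FractionRing (MvPolynomial (Fin N) ℚ) with hK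
  set y : Fin N → K := Xfrac N with hy
  set L : List K := List.ofFn y with hL
  set δf : Fin N → ℕ := fun i => N - 1 - (i : ℕ) with hδf
  set αf : (ℕ → ℕ) → (Fin N → ℕ) := fun lam i => lam i + (N - 1 - (i : ℕ)) with hαf
  have hXne : ∀ β : Fin N → ℕ, Function.Injective β → det (Xmat y β) ≠ 0 := by
    intro β hβ
    have hmap : Xmat y β = (algebraMap (MvPolynomial (Fin N) ℚ) K).mapMatrix
        (Matrix.of fun i j : Fin N => (X j : MvPolynomial (Fin N) ℚ) ^ β i) := by
      ext i j
      simp [Xmat, Xfrac, map_pow, hy, RingHom.mapMatrix_apply, Matrix.map_apply]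
      rfl
    rw [hmap, ← RingHom.map_det]
    intro h
    exact alternant_ne_zero β hβ
      ((map_eq_zero_iff _ (IsFractionRing.injective (MvPolynomial (Fin N) ℚ) K)).mp h)
  have hδinj : Function.Injective δf := by
    intro a b hab
    have ha := a.isLt
    have hb := b.isLt
    simp only [hδf] at hab
    exact Fin.ext (by omega)
  have hδX : det (Xmat y δf) ≠ 0 := hXne δf hδinj
  have hEfact : det (Xmat y δf) = det (Emat y) := by
    have h1 := congrArg det (Hmat_mul_Emat y δf)
    rw [det_mul] at h1
    have h2 : Hmat L δf = Matrix.of fun i j : Fin N => hZ L (((j : ℕ) : ℤ) - ((i : ℕ) : ℤ)) := by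
      ext i r
      simp only [Hmat, Matrix.of_apply, hδf]
      congr 1
      have := i.isLt
      have := r.isLt
      omega
    rw [← hL, h2, det_hZ_shift, one_mul] at h1
    exact h1.symm
  have hEne : det (Emat y) ≠ 0 := hEfact ▸ hδX
  have hschur : ∀ lam : ℕ → ℕ, schurDet N lam = det (Hmat L (αf lam)) := by
    intro lam
    have h1 := congrArg det (Hmat_mul_Emat y (αf lam))
    rw [det_mul, ← hL] at h1
    show det (Xmat y (αf lam)) / det (Xmat y δf) = _
    rw [← h1, hEfact]
    exact mul_div_cancel_right₀ _ hEne
  have hHJT : ∀ lam : ℕ → ℕ, det (Hmat L (αf lam))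
      = det (Matrix.of fun i j : Fin N => hZ L ((lam i : ℤ) - (i : ℕ) + (j : ℕ))) := by
    intro lam
    congr 1
    ext i r
    simp only [Hmat, Matrix.of_apply, hαf]
    congr 1
    have := i.isLt
    have := r.isLt
    omega
  have hrect : ∀ (c m : ℕ), m ≤ N →
      det (Matrix.of fun i j : Fin N => hZ L ((rectPart c m (i : ℕ) : ℤ) - (i : ℕ) + (j : ℕ)))
        = det (Matrix.of fun i j : Fin m => hZ L ((c : ℤ) - (i : ℕ) + (j : ℕ))) := by
    intro c m hm
    obtain ⟨p, hNp⟩ := Nat.exists_eq_add_of_le hm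
    subst hNp
    rw [det_JT_pad L m p _ (fun i hi => by simp [rectPart, not_lt.mpr hi])]
    congr 1
    ext i j
    congr 2
    simp [rectPart, i.isLt]
  have hg : ∀ (c m : ℕ), m ≤ N → schurDet N (rectPart c m)
      = det (Matrix.of fun i j : Fin m => hZ L ((c : ℤ) - (i : ℕ) + (j : ℕ))) := by
    intro c m hm
    rw [hschur, hHJT, hrect c m hm]
  have hrectmono : ∀ (c m : ℕ) (x y' : ℕ), x ≤ y' → rectPart c m y' ≤ rectPart c m x := by
    intro c m x y' hxy
    simp only [rectPart]
    split_ifs <;> omega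
  have hαinj : ∀ lam : ℕ → ℕ, (∀ x y', x ≤ y' → lam y' ≤ lam x) →
      Function.Injective (αf lam) := by
    intro lam hmono a b hab
    have ha := a.isLt
    have hb := b.isLt
    simp only [hαf] at hab
    rcases Nat.lt_trichotomy (a : ℕ) (b : ℕ) with h | h | h
    · have h1 := hmono (a : ℕ) (b : ℕ) (le_of_lt h)
      omega
    · exact Fin.ext h
    · have h1 := hmono (b : ℕ) (a : ℕ) (le_of_lt h)
      omega
  obtain ⟨q, rfl⟩ : ∃ q, n = q + 1 := ⟨n - 1, by omega⟩
  set Mbig : Matrix (Fin (q + 2)) (Fin (q + 2)) K :=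
    Matrix.of fun i j => hZ L ((k : ℤ) - (i : ℕ) + (j : ℕ)) with hMbig
  have hdMbig : det Mbig = schurDet N (rectPart k (q + 2)) := (hg k (q + 2) (by omega)).symm
  have hd : det Mbig ≠ 0 := by
    have hform : schurDet N (rectPart k (q + 2))
        = det (Xmat y (αf (rectPart k (q + 2)))) / det (Xmat y δf) := rfl
    rw [hdMbig, hform]
    exact div_ne_zero (hXne _ (hαinj _ (hrectmono k (q + 2)))) hδX
  have hdod := dodgson Mbig hd
  have hSS : Mbig.submatrix Fin.succ Fin.succ
      = Matrix.of fun i j : Fin (q + 1) => hZ L ((k : ℤ) - (i : ℕ) + (j : ℕ)) := by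
    ext i j
    simp only [Matrix.submatrix_apply, hMbig, Matrix.of_apply]
    congr 1
    simp only [Fin.val_succ]
    push_cast
    ring
  have hCC : Mbig.submatrix Fin.castSucc Fin.castSucc
      = Matrix.of fun i j : Fin (q + 1) => hZ L ((k : ℤ) - (i : ℕ) + (j : ℕ)) := by
    ext i j
    simp only [Matrix.submatrix_apply, hMbig, Matrix.of_apply, Fin.coe_castSucc]
  have hCS : Mbig.submatrix Fin.castSucc Fin.succ
      = Matrix.of fun i j : Fin (q + 1) => hZ L (((k + 1 : ℕ) : ℤ) - (i : ℕ) + (j : ℕ)) := by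
    ext i j
    simp only [Matrix.submatrix_apply, hMbig, Matrix.of_apply, Fin.coe_castSucc, Fin.val_succ]
    congr 1
    push_cast
    ring
  have hSC : Mbig.submatrix Fin.succ Fin.castSucc
      = Matrix.of fun i j : Fin (q + 1) => hZ L (((k - 1 : ℕ) : ℤ) - (i : ℕ) + (j : ℕ)) := by
    ext i j
    simp only [Matrix.submatrix_apply, hMbig, Matrix.of_apply, Fin.coe_castSucc, Fin.val_succ]
    congr 1
    omega
  have hInt : Mbig.submatrix (fun i : Fin q => (i.succ).castSucc)
        (fun j : Fin q => (j.succ).castSucc)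
      = Matrix.of fun i j : Fin q => hZ L ((k : ℤ) - (i : ℕ) + (j : ℕ)) := by
    ext i j
    simp only [Matrix.submatrix_apply, hMbig, Matrix.of_apply, Fin.coe_castSucc, Fin.val_succ]
    congr 1
    push_cast
    ring
  rw [hSS, hCC, hCS, hSC, hInt] at hdod
  have e1 := hg k (q + 1) (by omega)
  have e2 := hg (k + 1) (q + 1) (by omega)
  have e3 := hg (k - 1) (q + 1) (by omega)
  have e5 : schurDet N (rectPart k (q + 1 - 1))
      = det (Matrix.of fun i j : Fin q => hZ L ((k : ℤ) - (i : ℕ) + (j : ℕ))) := by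
    have : q + 1 - 1 = q := by omega
    rw [this]
    exact hg k q (by omega)
  have e4 : schurDet N (rectPart k (q + 1 + 1)) = det Mbig := hg k (q + 1 + 1) (by omega)
  rw [e1, e2, e3, e4, e5]
  linear_combination -hdod
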